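/- First-moment identity for the mixing profile: if η̃ is a mixing profile for η₊, η₋ ∈ (−1/√3, 1/√3), then the function ξ ↦ ξ·[η̃(ξ) − η∞(ξ)] is integrable on ℝ and ∫_ℝ ξ·[η̃(ξ) − η∞(ξ)] dξ = A(η₋) − A(η₊). -/

import Mathlib

noncomputable section

open Real Filter MeasureTheory Set Topology

/-- The coefficient `a(η) = (1 - 3η²)/(1 - η²)`. -/
def aGL (η : ℝ) : ℝ := (1 - 3 * η ^ 2) / (1 - η ^ 2)

/-- The primitive `A(η) = ∫₀^η a(s) ds`. -/
def AGL (η : ℝ) : ℝ := ∫ s in (0:ℝ)..η, aGL s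

lemma sq_lt_third {η : ℝ} (h : η ∈ Set.Ioo (-(1 / Real.sqrt 3)) (1 / Real.sqrt 3)) :
    η ^ 2 < 1 / 3 := by
  have h3 : (0:ℝ) < Real.sqrt 3 := Real.sqrt_pos.2 (by norm_num)
  have habs : |η| < 1 / Real.sqrt 3 := abs_lt.2 ⟨h.1, h.2⟩
  have := sq_lt_sq' h.1 h.2
  calc η ^ 2 < (1 / Real.sqrt 3) ^ 2 := this
    _ = 1 / 3 := by rw [div_pow, one_pow, Real.sq_sqrt (by norm_num : (3:ℝ) ≥ 0)]

lemma aGL_pos {η : ℝ} (h : η ^ 2 < 1 / 3) : 0 < aGL η := by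
  unfold aGL
  apply div_pos <;> nlinarith

lemma aGL_le_one {η : ℝ} (h : η ^ 2 < 1 / 3) : aGL η ≤ 1 := by
  unfold aGL
  rw [div_le_one (by nlinarith)]
  nlinarith

lemma aGL_contAt {η : ℝ} (h : η ^ 2 < 1) : ContinuousAt aGL η := by
  apply ContinuousAt.div (by fun_prop) (by fun_prop)
  intro hc; nlinarith [hc]

lemma hasDerivAt_AGL {x : ℝ} (hx : x ^ 2 < 1) : HasDerivAt AGL (aGL x) x := by
  have hsub : Set.uIcc (0:ℝ) x ⊆ {y : ℝ | y ^ 2 < 1} := by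
    intro y hy
    rcases Set.mem_uIcc.1 hy with ⟨h1, h2⟩ | ⟨h1, h2⟩
    · show y ^ 2 < 1
      nlinarith [mul_nonneg (sub_nonneg.2 h2) (by linarith : (0:ℝ) ≤ x + y)]
    · show y ^ 2 < 1
      nlinarith [mul_nonneg (sub_nonneg.2 h1) (by linarith : (0:ℝ) ≤ -(x + y))]
  have hcont : ContinuousOn aGL (Set.uIcc (0:ℝ) x) := by
    intro y hy
    exact (aGL_contAt (hsub hy)).continuousWithinAt
  have hint : IntervalIntegrable aGL volume 0 x := hcont.intervalIntegrable
  exact intervalIntegral.integral_hasDerivAt_right hint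
    (ContinuousAt.stronglyMeasurableAtFilter
      (s := {y : ℝ | y ^ 2 < 1})
      (isOpen_lt (by continuity) continuous_const)
      (fun y hy => aGL_contAt hy) x hx)
    (aGL_contAt hx)

lemma aGL_ge {η : ℝ} (h : η ^ 2 < 1 / 3) : 1 - 3 * η ^ 2 ≤ aGL η := by
  unfold aGL
  rw [le_div_iff₀ (by nlinarith)]
  nlinarith

lemma tendsto_x_exp_sq : Tendsto (fun x : ℝ => x * Real.exp (-(x ^ 2 / 4))) atTop (𝓝 0) := by
  apply squeeze_zero' (g := fun x : ℝ => x * Real.exp (-x))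
  · filter_upwards [eventually_ge_atTop (0:ℝ)] with x hx
    positivity
  · filter_upwards [eventually_ge_atTop (4:ℝ)] with x hx
    have : x ≤ x ^ 2 / 4 := by nlinarith
    exact mul_le_mul_of_nonneg_left (Real.exp_le_exp.2 (by linarith)) (by linarith)
  · simpa using tendsto_pow_mul_exp_neg_atTop_nhds_zero 1

lemma exists_sq_bound (e : ℝ → ℝ) (hc : Continuous e) {p m : ℝ}
    (hp : Tendsto e atTop (𝓝 p)) (hm : Tendsto e atBot (𝓝 m))
    (hb : ∀ ξ, (e ξ) ^ 2 < 1 / 3) (hpb : p ^ 2 < 1 / 3) (hmb : m ^ 2 < 1 / 3) :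
    ∃ c : ℝ, c < 1 / 3 ∧ ∀ ξ, (e ξ) ^ 2 ≤ c := by
  set f : ℝ → ℝ := fun ξ => (e ξ) ^ 2 with hf
  have hfc : Continuous f := by fun_prop
  set c2 : ℝ := (max (p ^ 2) (m ^ 2) + 1 / 3) / 2 with hc2
  have hc2lt : c2 < 1 / 3 := by
    have := max_lt hpb hmb
    simp only [hc2]; linarith
  have h1 : ∀ᶠ ξ in atTop, f ξ < c2 := by
    refine Filter.Tendsto.eventually_lt_const ?_ (hp.pow 2)
    have := le_max_left (p ^ 2) (m ^ 2); simp only [hc2]; linarith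
  have h2 : ∀ᶠ ξ in atBot, f ξ < c2 := by
    refine Filter.Tendsto.eventually_lt_const ?_ (hm.pow 2)
    have := le_max_right (p ^ 2) (m ^ 2); simp only [hc2]; linarith
  obtain ⟨T1, hT1⟩ := eventually_atTop.1 h1
  obtain ⟨T2, hT2⟩ := eventually_atBot.1 h2
  set a : ℝ := min T2 0
  set b : ℝ := max T1 0
  have hab : a ≤ b := le_trans (min_le_right _ _) (le_max_right _ _)
  obtain ⟨ξ0, -, hmax⟩ := isCompact_Icc.exists_isMaxOn (Set.nonempty_Icc.2 hab)
    hfc.continuousOn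
  refine ⟨max c2 (f ξ0), max_lt hc2lt (hb ξ0), fun ξ => ?_⟩
  rcases lt_or_ge ξ a with h | h
  · have : ξ ≤ T2 := le_of_lt (lt_of_lt_of_le h (min_le_left _ _))
    exact le_trans (le_of_lt (hT2 ξ this)) (le_max_left _ _)
  rcases le_or_gt ξ b with h' | h'
  · exact le_trans (hmax ⟨h, h'⟩) (le_max_right _ _)
  · have : T1 ≤ ξ := le_trans (le_max_left _ _) (le_of_lt h')
    exact le_trans (le_of_lt (hT1 ξ this)) (le_max_left _ _)

/-- A mixing profile for boundary values `ηp` (at `+∞`) and `ηm` (at `-∞`). -/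
def IsMixingProfile (ηp ηm : ℝ) (e : ℝ → ℝ) : Prop :=
  ContDiff ℝ 2 e ∧
  (∀ ξ, e ξ ∈ Set.Ioo (-(1 / Real.sqrt 3)) (1 / Real.sqrt 3)) ∧
  (∀ ξ, deriv (deriv (fun x => AGL (e x))) ξ + ξ / 2 * deriv e ξ = 0) ∧
  Filter.Tendsto e Filter.atTop (nhds ηp) ∧
  Filter.Tendsto e Filter.atBot (nhds ηm)
/-- The step function `η∞`, equal to `ηp` for `ξ > 0` and `ηm` for `ξ ≤ 0`. -/
def etaInf (ηp ηm : ℝ) (ξ : ℝ) : ℝ := if 0 < ξ then ηp else ηm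

/-- First-moment identity for the mixing profile. -/
theorem mixing_profile_first_moment
    (ηp ηm : ℝ)
    (hp : ηp ∈ Set.Ioo (-(1 / Real.sqrt 3)) (1 / Real.sqrt 3))
    (hm : ηm ∈ Set.Ioo (-(1 / Real.sqrt 3)) (1 / Real.sqrt 3))
    (e : ℝ → ℝ) (he : IsMixingProfile ηp ηm e) :
    Integrable (fun ξ => ξ * (e ξ - etaInf ηp ηm ξ)) ∧
    (∫ ξ : ℝ, ξ * (e ξ - etaInf ηp ηm ξ)) = AGL ηm - AGL ηp := by
  obtain ⟨hC2, hrange, hODE, hTp, hTm⟩ := he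
  have hediff : Differentiable ℝ e := hC2.differentiable (by norm_num)
  have hecont : Continuous e := hediff.continuous
  have hsq : ∀ ξ, (e ξ) ^ 2 < 1 / 3 := fun ξ => sq_lt_third (hrange ξ)
  have hsq1 : ∀ ξ, (e ξ) ^ 2 < 1 := fun ξ => lt_trans (hsq ξ) (by norm_num)
  obtain ⟨c, hc3, hcb⟩ := exists_sq_bound e hecont hTp hTm hsq (sq_lt_third hp)
    (sq_lt_third hm)
  have hc0 : 0 ≤ c := le_trans (sq_nonneg _) (hcb 0)
  set δ : ℝ := 1 - 3 * c with hδdef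
  have hδ : 0 < δ := by simp only [hδdef]; linarith
  have hδle : ∀ ξ, δ ≤ aGL (e ξ) := fun ξ =>
    le_trans (by simp only [hδdef]; nlinarith [hcb ξ]) (aGL_ge (hsq ξ))
  have hapos : ∀ ξ, 0 < aGL (e ξ) := fun ξ => lt_of_lt_of_le hδ (hδle ξ)
  have hale : ∀ ξ, aGL (e ξ) ≤ 1 := fun ξ => aGL_le_one (hsq ξ)
  -- derivative regularity
  have hde1 : ContDiff ℝ 1 (deriv e) := by
    have h2 : ContDiff ℝ ((1:ℕ) + 1) e := by exact_mod_cast hC2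
    exact (contDiff_succ_iff_deriv.mp h2).2.2
  have hdediff : Differentiable ℝ (deriv e) := hde1.differentiable (by norm_num)
  have hdecont : Continuous (deriv e) := hdediff.continuous
  -- the flux g
  set g : ℝ → ℝ := fun ξ => aGL (e ξ) * deriv e ξ with hgdef
  have haGLdiff : Differentiable ℝ (fun ξ => aGL (e ξ)) := by
    intro ξ
    apply DifferentiableAt.div
    · exact (differentiableAt_const _).sub (((hediff ξ).pow 2).const_mul 3)
    · exact (differentiableAt_const _).sub ((hediff ξ).pow 2)
    · intro hcontra; nlinarith [hsq1 ξ]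
  have haGLcont : Continuous (fun ξ => aGL (e ξ)) := haGLdiff.continuous
  have hgdiff : Differentiable ℝ g := haGLdiff.mul hdediff
  have hgcont : Continuous g := hgdiff.continuous
  have hFd : ∀ ξ, HasDerivAt (fun x => AGL (e x)) (g ξ) ξ := fun ξ =>
    (hasDerivAt_AGL (hsq1 ξ)).comp ξ (hediff ξ).hasDerivAt
  have hderivF : deriv (fun x => AGL (e x)) = g := funext fun ξ => (hFd ξ).deriv
  have hgd : ∀ ξ, HasDerivAt g (-(ξ / 2 * deriv e ξ)) ξ := by
    intro ξ
    have h1 := (hgdiff ξ).hasDerivAt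
    have h2 : deriv g ξ = -(ξ / 2 * deriv e ξ) := by
      have := hODE ξ; rw [hderivF] at this; linarith
    rwa [h2] at h1
  -- integrating factor
  set B : ℝ → ℝ := fun ξ => ∫ s in (0:ℝ)..ξ, s / (2 * aGL (e s)) with hBdef
  have hBic : Continuous (fun s => s / (2 * aGL (e s))) :=
    continuous_id.div (continuous_const.mul haGLcont)
      (fun s => by have := hapos s; intro hc; nlinarith)
  have hBd : ∀ ξ, HasDerivAt B (ξ / (2 * aGL (e ξ))) ξ := fun ξ =>
    intervalIntegral.integral_hasDerivAt_right (hBic.intervalIntegrable _ _)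
      (hBic.stronglyMeasurableAtFilter _ _) hBic.continuousAt
  have hB0 : B 0 = 0 := intervalIntegral.integral_same
  -- solve for g
  have hgf : ∀ ξ, g ξ = g 0 * Real.exp (-(B ξ)) := by
    have hconst : ∀ ξ, g ξ * Real.exp (B ξ) = g 0 := by
      intro ξ
      have hd : ∀ x, HasDerivAt (fun y => g y * Real.exp (B y)) 0 x := by
        intro x
        have h1 := (hgd x).mul ((hBd x).exp)
        convert h1 using 1
        have ha := ne_of_gt (hapos x)
        show (0:ℝ) = -(x / 2 * deriv e x) * Real.exp (B x) +
          (fun ξ => aGL (e ξ) * deriv e ξ) x * (Real.exp (B x) * (x / (2 * aGL (e x))))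
        field_simp
        rw [div_self (ne_of_gt (hapos x))]; ring
        · rfl
        · rfl
        · rfl
      have hcst := is_const_of_deriv_eq_zero
        (fun x => (hd x).differentiableAt) (fun x => (hd x).deriv) ξ 0
      simpa [hB0] using hcst
    intro ξ
    have h := hconst ξ
    rw [Real.exp_neg, ← h, mul_assoc, mul_inv_cancel₀ (Real.exp_ne_zero _), mul_one]
  have hBlb : ∀ ξ, ξ ^ 2 / 4 ≤ B ξ := by
    intro ξ
    rcases le_or_gt 0 ξ with h | h
    · have hle : ∀ s ∈ Set.Icc (0:ℝ) ξ, s / 2 ≤ s / (2 * aGL (e s)) := by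
        intro s hs
        rw [div_le_div_iff₀ (by norm_num) (by have := hapos s; linarith)]
        nlinarith [hale s, hapos s, hs.1]
      have h1 : ∫ s in (0:ℝ)..ξ, s / 2 ≤ B ξ :=
        intervalIntegral.integral_mono_on h
          (Continuous.intervalIntegrable (by fun_prop) _ _)
          (hBic.intervalIntegrable _ _) hle
      have h2 : ∫ s in (0:ℝ)..ξ, s / 2 = ξ ^ 2 / 4 := by
        rw [intervalIntegral.integral_div, integral_id]; ring
      linarith
    · have hle : ∀ s ∈ Set.Icc ξ (0:ℝ), s / (2 * aGL (e s)) ≤ s / 2 := by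
        intro s hs
        rw [div_le_div_iff₀ (by have := hapos s; linarith) (by norm_num)]
        nlinarith [hale s, hapos s, hs.2]
      have h1 : ∫ s in ξ..(0:ℝ), s / (2 * aGL (e s)) ≤ ∫ s in ξ..(0:ℝ), s / 2 :=
        intervalIntegral.integral_mono_on (le_of_lt h)
          (hBic.intervalIntegrable _ _)
          (Continuous.intervalIntegrable (by fun_prop) _ _) hle
      have h2 : ∫ s in ξ..(0:ℝ), s / 2 = -(ξ ^ 2 / 4) := by
        rw [intervalIntegral.integral_div, integral_id]; ring
      have h3 : B ξ = -∫ s in ξ..(0:ℝ), s / (2 * aGL (e s)) := by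
        simp only [hBdef]
        rw [intervalIntegral.integral_symm]
      rw [h3]; linarith
  set C : ℝ := |g 0| / δ with hCdef
  have hC0 : 0 ≤ C := by positivity
  have hgb : ∀ ξ, |g ξ| ≤ |g 0| * Real.exp (-(ξ ^ 2 / 4)) := by
    intro ξ
    rw [hgf ξ, abs_mul, Real.abs_exp]
    exact mul_le_mul_of_nonneg_left
      (Real.exp_le_exp.2 (neg_le_neg (hBlb ξ))) (abs_nonneg _)
  have heb : ∀ ξ, |deriv e ξ| ≤ C * Real.exp (-(ξ ^ 2 / 4)) := by
    intro ξ
    have h1 : deriv e ξ = g ξ / aGL (e ξ) := by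
      field_simp [hgdef, ne_of_gt (hapos ξ)]
      exact mul_comm _ _
    rw [h1, abs_div, abs_of_pos (hapos ξ), hCdef, div_mul_eq_mul_div]
    apply div_le_div₀ (by positivity) (hgb ξ) hδ (hδle ξ)
  -- tail bounds
  have hanti : ∀ (K : ℝ) (s : ℝ), HasDerivAt (fun u : ℝ => -2 * K * Real.exp (-(u ^ 2 / 4)))
      (K * (s * Real.exp (-(s ^ 2 / 4)))) s := by
    intro K s
    have h0 : HasDerivAt (fun u : ℝ => -(u ^ 2 / 4)) (-(s / 2)) s := by
      have h := ((hasDerivAt_pow 2 s).div_const 4).neg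
      convert h using 1
      · rfl
      · rfl
      · rfl
      simp; ring
    have h1 := (h0.exp).const_mul (-2 * K)
    convert h1 using 1
    · rfl
    · rfl
    ring
  have htailp : ∀ ξ : ℝ, 0 < ξ → |e ξ - ηp| ≤ 2 * C / ξ * Real.exp (-(ξ ^ 2 / 4)) := by
    intro ξ hξ
    have key : ∀ T, ξ ≤ T → |e T - e ξ| ≤ 2 * C / ξ * Real.exp (-(ξ ^ 2 / 4)) := by
      intro T hT
      have hftc : ∫ s in ξ..T, deriv e s = e T - e ξ :=
        intervalIntegral.integral_deriv_eq_sub (fun x _ => hediff x)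
          (hdecont.intervalIntegrable _ _)
      rw [← hftc]
      have h1 : |∫ s in ξ..T, deriv e s| ≤ ∫ s in ξ..T, |deriv e s| :=
        intervalIntegral.abs_integral_le_integral_abs hT
      have h2 : ∫ s in ξ..T, |deriv e s| ≤
          ∫ s in ξ..T, (C / ξ) * (s * Real.exp (-(s ^ 2 / 4))) := by
        apply intervalIntegral.integral_mono_on hT
          (Continuous.intervalIntegrable (by fun_prop) _ _)
          (Continuous.intervalIntegrable (by fun_prop) _ _)
        intro s hs
        have hs1 : ξ ≤ s := hs.1
        calc |deriv e s| ≤ C * Real.exp (-(s ^ 2 / 4)) := heb s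
          _ = C * Real.exp (-(s ^ 2 / 4)) * 1 := by ring
          _ ≤ C * Real.exp (-(s ^ 2 / 4)) * (s / ξ) := by
              apply mul_le_mul_of_nonneg_left ((le_div_iff₀ hξ).2 (by linarith))
              exact mul_nonneg hC0 (le_of_lt (Real.exp_pos _))
          _ = (C / ξ) * (s * Real.exp (-(s ^ 2 / 4))) := by ring
      have h3 : ∫ s in ξ..T, (C / ξ) * (s * Real.exp (-(s ^ 2 / 4)))
          = -2 * (C / ξ) * Real.exp (-(T ^ 2 / 4)) - (-2) * (C / ξ) * Real.exp (-(ξ ^ 2 / 4)) := by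
        have := intervalIntegral.integral_eq_sub_of_hasDerivAt
          (f := fun u : ℝ => -2 * (C / ξ) * Real.exp (-(u ^ 2 / 4))) (a := ξ) (b := T)
          (fun s _ => hanti (C / ξ) s)
          (Continuous.intervalIntegrable (by fun_prop) _ _)
        rw [this]
      have h4 : -2 * (C / ξ) * Real.exp (-(T ^ 2 / 4)) - (-2) * (C / ξ) * Real.exp (-(ξ ^ 2 / 4))
          ≤ 2 * C / ξ * Real.exp (-(ξ ^ 2 / 4)) := by
        have e1 : (0:ℝ) < Real.exp (-(T ^ 2 / 4)) := Real.exp_pos _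
        have e2 : 0 ≤ C / ξ := by positivity
        have t1 : 0 ≤ C / ξ * Real.exp (-(T ^ 2 / 4)) := mul_nonneg e2 e1.le
        have h2C : 2 * C / ξ = 2 * (C / ξ) := by ring
        rw [h2C]; linarith
      linarith
    have hlim : Tendsto (fun T => |e T - e ξ|) atTop (𝓝 |ηp - e ξ|) :=
      ((hTp.sub_const (e ξ)).abs)
    have := le_of_tendsto hlim (eventually_atTop.2 ⟨ξ, key⟩)
    rwa [abs_sub_comm] at this
  have hantim : ∀ (K : ℝ) (s : ℝ), HasDerivAt (fun u : ℝ => 2 * K * Real.exp (-(u ^ 2 / 4)))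
      (K * (-s * Real.exp (-(s ^ 2 / 4)))) s := by
    intro K s
    have h1 := (hanti (-K)) s
    convert h1 using 1
    · funext u; ring
    · ring
  have htailm : ∀ ξ : ℝ, ξ < 0 → |e ξ - ηm| ≤ 2 * C / (-ξ) * Real.exp (-(ξ ^ 2 / 4)) := by
    intro ξ hξ
    have hξ' : (0:ℝ) < -ξ := by linarith
    have key : ∀ T, T ≤ ξ → |e ξ - e T| ≤ 2 * C / (-ξ) * Real.exp (-(ξ ^ 2 / 4)) := by
      intro T hT
      have hftc : ∫ s in T..ξ, deriv e s = e ξ - e T :=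
        intervalIntegral.integral_deriv_eq_sub (fun x _ => hediff x)
          (hdecont.intervalIntegrable _ _)
      rw [← hftc]
      have h1 : |∫ s in T..ξ, deriv e s| ≤ ∫ s in T..ξ, |deriv e s| :=
        intervalIntegral.abs_integral_le_integral_abs hT
      have h2 : ∫ s in T..ξ, |deriv e s| ≤
          ∫ s in T..ξ, (C / (-ξ)) * (-s * Real.exp (-(s ^ 2 / 4))) := by
        apply intervalIntegral.integral_mono_on hT
          (Continuous.intervalIntegrable (by fun_prop) _ _)
          (Continuous.intervalIntegrable (by fun_prop) _ _)
        intro s hs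
        have hs2 : s ≤ ξ := hs.2
        calc |deriv e s| ≤ C * Real.exp (-(s ^ 2 / 4)) := heb s
          _ = C * Real.exp (-(s ^ 2 / 4)) * 1 := by ring
          _ ≤ C * Real.exp (-(s ^ 2 / 4)) * (-s / -ξ) := by
              apply mul_le_mul_of_nonneg_left ((le_div_iff₀ hξ').2 (by linarith))
              exact mul_nonneg hC0 (le_of_lt (Real.exp_pos _))
          _ = (C / (-ξ)) * (-s * Real.exp (-(s ^ 2 / 4))) := by ring
      have h3 : ∫ s in T..ξ, (C / (-ξ)) * (-s * Real.exp (-(s ^ 2 / 4)))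
          = 2 * (C / (-ξ)) * Real.exp (-(ξ ^ 2 / 4)) - 2 * (C / (-ξ)) * Real.exp (-(T ^ 2 / 4)) := by
        have := intervalIntegral.integral_eq_sub_of_hasDerivAt
          (f := fun u : ℝ => 2 * (C / (-ξ)) * Real.exp (-(u ^ 2 / 4))) (a := T) (b := ξ)
          (fun s _ => hantim (C / (-ξ)) s)
          (Continuous.intervalIntegrable (by fun_prop) _ _)
        rw [this]
      have h4 : 2 * (C / (-ξ)) * Real.exp (-(ξ ^ 2 / 4)) - 2 * (C / (-ξ)) * Real.exp (-(T ^ 2 / 4))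
          ≤ 2 * C / (-ξ) * Real.exp (-(ξ ^ 2 / 4)) := by
        have e1 : (0:ℝ) < Real.exp (-(T ^ 2 / 4)) := Real.exp_pos _
        have e2 : 0 ≤ C / (-ξ) := by positivity
        have t1 : 0 ≤ C / (-ξ) * Real.exp (-(T ^ 2 / 4)) := mul_nonneg e2 e1.le
        have h2C : 2 * C / (-ξ) = 2 * (C / (-ξ)) := by ring
        rw [h2C]; linarith
      linarith
    have hlim : Tendsto (fun T => |e ξ - e T|) atBot (𝓝 |e ξ - ηm|) :=
      ((hTm.const_sub (e ξ)).abs)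
    exact le_of_tendsto hlim (eventually_atBot.2 ⟨ξ, key⟩)
  -- integrand bound and integrability
  have hbd : ∀ ξ, |ξ * (e ξ - etaInf ηp ηm ξ)| ≤ 2 * C * Real.exp (-(ξ ^ 2 / 4)) := by
    intro ξ
    rcases lt_trichotomy ξ 0 with h | h | h
    · have : etaInf ηp ηm ξ = ηm := if_neg (by linarith)
      rw [this, abs_mul, abs_of_neg h]
      calc -ξ * |e ξ - ηm| ≤ -ξ * (2 * C / (-ξ) * Real.exp (-(ξ ^ 2 / 4))) :=
            mul_le_mul_of_nonneg_left (htailm ξ h) (by linarith)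
        _ = 2 * C * Real.exp (-(ξ ^ 2 / 4)) := by
            field_simp [ne_of_lt h]
    · subst h; simp; positivity
    · have : etaInf ηp ηm ξ = ηp := if_pos h
      rw [this, abs_mul, abs_of_pos h]
      calc ξ * |e ξ - ηp| ≤ ξ * (2 * C / ξ * Real.exp (-(ξ ^ 2 / 4))) :=
            mul_le_mul_of_nonneg_left (htailp ξ h) (by linarith)
        _ = 2 * C * Real.exp (-(ξ ^ 2 / 4)) := by field_simp [ne_of_gt h]
  have hmeasInt : AEStronglyMeasurable (fun ξ => ξ * (e ξ - etaInf ηp ηm ξ)) volume := by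
    apply Measurable.aestronglyMeasurable
    apply measurable_id.mul
    apply (hecont.measurable).sub
    exact Measurable.ite measurableSet_Ioi measurable_const measurable_const
  have hint : Integrable (fun ξ => ξ * (e ξ - etaInf ηp ηm ξ)) := by
    apply Integrable.mono
      (((integrable_exp_neg_mul_sq (by norm_num : (0:ℝ) < 1/4)).const_mul (2*C)))
      hmeasInt
    apply ae_of_all
    intro ξ
    rw [Real.norm_eq_abs, Real.norm_eq_abs]
    calc |ξ * (e ξ - etaInf ηp ηm ξ)| ≤ 2 * C * Real.exp (-(ξ ^ 2 / 4)) := hbd ξ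
      _ ≤ |2 * C * Real.exp (-(1/4) * ξ ^ 2)| := by
          rw [show -(1/4) * ξ ^ 2 = -(ξ ^ 2 / 4) by ring]
          exact le_abs_self _
  refine ⟨hint, ?_⟩
  have hp1 : ηp ^ 2 < 1 := lt_trans (sq_lt_third hp) (by norm_num)
  have hm1 : ηm ^ 2 < 1 := lt_trans (sq_lt_third hm) (by norm_num)
  have hsqhalf : ∀ x : ℝ, HasDerivAt (fun x : ℝ => x ^ 2 / 2) x x := by
    intro x
    have h := (hasDerivAt_pow 2 x).div_const 2
    simpa using h
  set Φ : ℝ → ℝ := fun ξ => ξ ^ 2 / 2 * (e ξ - ηp) + ξ * g ξ - AGL (e ξ) with hΦdef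
  set Ψ : ℝ → ℝ := fun ξ => ξ ^ 2 / 2 * (e ξ - ηm) + ξ * g ξ - AGL (e ξ) with hΨdef
  have hΦd : ∀ ξ, HasDerivAt Φ (ξ * (e ξ - ηp)) ξ := by
    intro ξ
    have h3 := (hsqhalf ξ).mul (((hediff ξ).hasDerivAt).sub_const ηp)
    have h4 := (hasDerivAt_id ξ).mul (hgd ξ)
    have h5 := (h3.add h4).sub (hFd ξ)
    convert h5 using 1
    · rfl
    · rfl
    · rfl
    simp only [hgdef, id_eq]
    ring
  have hΨd : ∀ ξ, HasDerivAt Ψ (ξ * (e ξ - ηm)) ξ := by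
    intro ξ
    have h3 := (hsqhalf ξ).mul (((hediff ξ).hasDerivAt).sub_const ηm)
    have h4 := (hasDerivAt_id ξ).mul (hgd ξ)
    have h5 := (h3.add h4).sub (hFd ξ)
    convert h5 using 1
    · rfl
    · rfl
    · rfl
    simp only [hgdef, id_eq]
    ring
  have hxexp := tendsto_x_exp_sq
  have hxexp_bot : Tendsto (fun x : ℝ => -x * Real.exp (-(x ^ 2 / 4))) atBot (𝓝 0) := by
    have h := hxexp.comp tendsto_neg_atBot_atTop
    simpa [Function.comp_def, neg_sq] using h
  -- limits of Φ at +∞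
  have hΦtop : Tendsto Φ atTop (𝓝 (0 + 0 - AGL ηp)) := by
    apply Tendsto.sub (Tendsto.add ?_ ?_) ?_
    · apply squeeze_zero_norm' ?_ (by simpa using hxexp.const_mul C)
      filter_upwards [eventually_gt_atTop (0:ℝ)] with ξ hξ
      rw [Real.norm_eq_abs, abs_mul, abs_of_pos (by positivity : (0:ℝ) < ξ ^ 2 / 2)]
      calc ξ ^ 2 / 2 * |e ξ - ηp|
          ≤ ξ ^ 2 / 2 * (2 * C / ξ * Real.exp (-(ξ ^ 2 / 4))) :=
            mul_le_mul_of_nonneg_left (htailp ξ hξ) (by positivity)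
        _ = C * (ξ * Real.exp (-(ξ ^ 2 / 4))) := by
            field_simp
    · apply squeeze_zero_norm' ?_ (by simpa using hxexp.const_mul (|g 0|))
      filter_upwards [eventually_ge_atTop (0:ℝ)] with ξ hξ
      rw [Real.norm_eq_abs, abs_mul, abs_of_nonneg hξ]
      calc ξ * |g ξ| ≤ ξ * (|g 0| * Real.exp (-(ξ ^ 2 / 4))) :=
            mul_le_mul_of_nonneg_left (hgb ξ) hξ
        _ = |g 0| * (ξ * Real.exp (-(ξ ^ 2 / 4))) := by ring
    · exact ((hasDerivAt_AGL hp1).continuousAt).tendsto.comp hTp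
  have hbot1 : Tendsto (fun x : ℝ => C * (-x * Real.exp (-(x ^ 2 / 4)))) atBot (𝓝 0) := by
    have h := hxexp_bot.const_mul C
    simpa using h
  have hbot2 : Tendsto (fun x : ℝ => |g 0| * (-x * Real.exp (-(x ^ 2 / 4)))) atBot (𝓝 0) := by
    have h := hxexp_bot.const_mul (|g 0|)
    simpa using h
  have hΨbot : Tendsto Ψ atBot (𝓝 (0 + 0 - AGL ηm)) := by
    apply Tendsto.sub (Tendsto.add ?_ ?_) ?_
    · apply squeeze_zero_norm' ?_ hbot1
      filter_upwards [eventually_lt_atBot (0:ℝ)] with ξ hξ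
      have hsqpos : (0:ℝ) < ξ ^ 2 / 2 := by nlinarith [mul_pos (neg_pos.2 hξ) (neg_pos.2 hξ)]
      have hne : ξ ≠ 0 := ne_of_lt hξ
      rw [Real.norm_eq_abs, abs_mul, abs_of_pos hsqpos]
      calc ξ ^ 2 / 2 * |e ξ - ηm|
          ≤ ξ ^ 2 / 2 * (2 * C / (-ξ) * Real.exp (-(ξ ^ 2 / 4))) :=
            mul_le_mul_of_nonneg_left (htailm ξ hξ) (le_of_lt hsqpos)
        _ = C * (-ξ * Real.exp (-(ξ ^ 2 / 4))) := by
            field_simp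
    · apply squeeze_zero_norm' ?_ hbot2
      filter_upwards [eventually_le_atBot (0:ℝ)] with ξ hξ
      rw [Real.norm_eq_abs, abs_mul, abs_of_nonpos hξ]
      calc -ξ * |g ξ| ≤ -ξ * (|g 0| * Real.exp (-(ξ ^ 2 / 4))) :=
            mul_le_mul_of_nonneg_left (hgb ξ) (by linarith)
        _ = |g 0| * (-ξ * Real.exp (-(ξ ^ 2 / 4))) := by ring
    · exact ((hasDerivAt_AGL hm1).continuousAt).tendsto.comp hTm
  -- integrable pieces
  have hIoi : IntegrableOn (fun ξ => ξ * (e ξ - ηp)) (Ioi 0) volume := by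
    apply (hint.integrableOn).congr_fun ?_ measurableSet_Ioi
    intro ξ hξ
    simp only [etaInf, if_pos (Set.mem_Ioi.1 hξ)]
  have hIic : IntegrableOn (fun ξ => ξ * (e ξ - ηm)) (Iic 0) volume := by
    apply (hint.integrableOn).congr_fun ?_ measurableSet_Iic
    intro ξ hξ
    simp only [etaInf, if_neg (not_lt.2 (Set.mem_Iic.1 hξ))]
  have hIoiInt : ∫ ξ in Ioi 0, ξ * (e ξ - ηp) = (0 + 0 - AGL ηp) - Φ 0 :=
    MeasureTheory.integral_Ioi_of_hasDerivAt_of_tendsto' (fun x _ => hΦd x) hIoi hΦtop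
  have hIicInt : ∫ ξ in Iic 0, ξ * (e ξ - ηm) = Ψ 0 - (0 + 0 - AGL ηm) :=
    MeasureTheory.integral_Iic_of_hasDerivAt_of_tendsto' (fun x _ => hΨd x) hIic hΨbot
  have hsplit := intervalIntegral.integral_Iic_add_Ioi (b := (0:ℝ))
    (hint.integrableOn) (hint.integrableOn)
  rw [← hsplit]
  have e1 : ∫ ξ in Iic (0:ℝ), ξ * (e ξ - etaInf ηp ηm ξ) = ∫ ξ in Iic (0:ℝ), ξ * (e ξ - ηm) := by
    apply MeasureTheory.setIntegral_congr_fun measurableSet_Iic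
    intro ξ hξ
    simp only [etaInf, if_neg (not_lt.2 (Set.mem_Iic.1 hξ))]
  have e2 : ∫ ξ in Ioi (0:ℝ), ξ * (e ξ - etaInf ηp ηm ξ) = ∫ ξ in Ioi (0:ℝ), ξ * (e ξ - ηp) := by
    apply MeasureTheory.setIntegral_congr_fun measurableSet_Ioi
    intro ξ hξ
    simp only [etaInf, if_pos (Set.mem_Ioi.1 hξ)]
  rw [e1, e2, hIoiInt, hIicInt]
  have hΦ0 : Φ 0 = -AGL (e 0) := by simp [hΦdef]
  have hΨ0 : Ψ 0 = -AGL (e 0) := by simp [hΨdef]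
  rw [hΦ0, hΨ0]
  ring
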